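/- arXiv:1902.07044 — 7 statements merged into one kernel-verified Lean document; each statement's English description precedes it below -/
import Mathlib

section
/- Let (X, d) be a metric space and let a, x, y, b ∈ X satisfy a < x < y < b (i.e., d(a,x)+d(x,y) = d(a,y), d(x,y)+d(y,b) = d(x,b), with the adjacent points distinct). If additionally there exists z ∈ X with x < y < z < b and d(a, y) + d(y, z) > d(a, z), then d(a, x) + d(x, z) > d(a, z) and d(x, z) + d(z, b) = d(x, b). -/
def IsGeodesic {X : Type*} [MetricSpace X] (a b : X) (f : ℝ → X) : Prop :=
  f 0 = a ∧ f (dist a b) = b ∧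
    ∀ s ∈ Set.Icc (0 : ℝ) (dist a b), ∀ t ∈ Set.Icc (0 : ℝ) (dist a b),
      dist (f s) (f t) = |s - t|

def GeodesicSpace (X : Type*) [MetricSpace X] : Prop :=
  ∀ a b : X, ∃ f : ℝ → X, IsGeodesic a b f

/-- `MBtw p q r` means `p < q < r`: `q` is strictly between `p` and `r`. -/
def MBtw {X : Type*} [MetricSpace X] (p q r : X) : Prop :=
  p ≠ q ∧ q ≠ r ∧ dist p q + dist q r = dist p r

theorem stmt5 {X : Type*} [MetricSpace X] (a x y b z : X)
    (h1 : MBtw a x y) (h2 : MBtw x y b)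
    (h3 : MBtw x y z) (h4 : MBtw y z b)
    (h5 : dist a y + dist y z > dist a z) :
    dist a x + dist x z > dist a z ∧ dist x z + dist z b = dist x b := by
  obtain ⟨_,_,e1⟩ := h1
  obtain ⟨_,_,e2⟩ := h2
  obtain ⟨_,_,e3⟩ := h3
  obtain ⟨_,_,e4⟩ := h4
  constructor <;> linarith
end

section
/- Let (X, d) be a geodesic metric space and let a, x, y, b ∈ X form a 4-cut: a < x < y < b, d(a, y) + d(y, b) > d(a, b), and d(a, x) + d(x, b) > d(a, b). Then there exists z ∈ X such that x < y < z < b and d(a, y) + d(y, z) > d(a, z). -/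
theorem stmt6 {X : Type*} [MetricSpace X] (hX : GeodesicSpace X) (a x y b : X)
    (h1 : MBtw a x y) (h2 : MBtw x y b)
    (hy : dist a y + dist y b > dist a b)
    (hx : dist a x + dist x b > dist a b) :
    ∃ z : X, MBtw x y z ∧ MBtw y z b ∧ dist a y + dist y z > dist a z := by
  obtain ⟨hax, hxy, hsum1⟩ := h1
  obtain ⟨hxy', hyb, hsum2⟩ := h2
  obtain ⟨f, hf0, hfD, hfd⟩ := hX y b
  have hD : 0 < dist y b := dist_pos.mpr hyb
  have he : 0 < dist a y + dist y b - dist a b := by linarith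
  obtain ⟨m, hm, hmD, hme⟩ :
      ∃ m : ℝ, 0 < m ∧ m ≤ dist y b ∧ m ≤ dist a y + dist y b - dist a b :=
    ⟨min (dist a y + dist y b - dist a b) (dist y b), lt_min he hD,
      min_le_right _ _, min_le_left _ _⟩
  obtain ⟨t, ht⟩ : ∃ t : ℝ, t = dist y b - m / 4 := ⟨_, rfl⟩
  have ht0 : 0 < t := by rw [ht]; linarith
  have htD : t < dist y b := by rw [ht]; linarith
  have htmem : t ∈ Set.Icc (0 : ℝ) (dist y b) := ⟨le_of_lt ht0, le_of_lt htD⟩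
  have h0mem : (0 : ℝ) ∈ Set.Icc (0 : ℝ) (dist y b) := ⟨le_refl _, le_of_lt hD⟩
  have hDmem : dist y b ∈ Set.Icc (0 : ℝ) (dist y b) := ⟨le_of_lt hD, le_refl _⟩
  refine ⟨f t, ?_⟩
  have hyz : dist y (f t) = t := by
    have h := hfd 0 h0mem t htmem
    rw [hf0] at h
    rw [h, abs_sub_comm, abs_of_nonneg (by linarith)]
    ring
  have hzb : dist (f t) b = dist y b - t := by
    have h := hfd t htmem (dist y b) hDmem
    rw [hfD] at h
    rw [h, abs_sub_comm, abs_of_nonneg (by linarith)]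
  have hyz0 : y ≠ f t := by
    intro h; rw [← h, dist_self] at hyz; linarith
  have hzb0 : f t ≠ b := by
    intro h; rw [h, dist_self] at hzb; linarith
  have hxz : dist x y + dist y (f t) = dist x (f t) := by
    have h1' : dist x (f t) ≤ dist x y + dist y (f t) := dist_triangle x y (f t)
    have h2' : dist x b ≤ dist x (f t) + dist (f t) b := dist_triangle x (f t) b
    rw [hyz]
    rw [hzb] at h2'
    linarith
  refine ⟨⟨hxy, hyz0, hxz⟩, ⟨hyz0, hzb0, by rw [hyz, hzb]; ring⟩, ?_⟩
  have haz : dist a (f t) ≤ dist a b + dist b (f t) := dist_triangle a b (f t)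
  rw [dist_comm b (f t), hzb] at haz
  rw [hyz, ht] at *
  linarith
end

section
/- Let (X, d) be a geodesic space, a, b ∈ X distinct, and suppose there is exactly one geodesic f joining a to b. Then every point x ∈ X with a < x < b lies on f, i.e., x = f(d(a, x)). Consequently, the set {x ∈ X : a < x < b} is totally ordered by the relation x ⪯ y defined by d(a, x) ≤ d(a, y). -/
theorem stmt10 {X : Type*} [MetricSpace X] (hX : GeodesicSpace X)
    (a b : X) (hab : a ≠ b) (f : ℝ → X) (hf : IsGeodesic a b f)
    (huniq : ∀ g : ℝ → X, IsGeodesic a b g →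
      ∀ t ∈ Set.Icc (0 : ℝ) (dist a b), g t = f t) :
    (∀ x : X, MBtw a x b → x = f (dist a x)) ∧
      (∀ x y : X, MBtw a x b → MBtw a y b → dist a x = dist a y → x = y) := by
  have key : ∀ x : X, MBtw a x b → x = f (dist a x) := by
    intro x hx
    obtain ⟨hax, hxb, hsum⟩ := hx
    obtain ⟨g1, h10, h1d, h1⟩ := hX a x
    obtain ⟨g2, h20, h2d, h2⟩ := hX x b
    set dax := dist a x with hdax
    set dxb := dist x b with hdxb
    have hax0 : 0 < dax := dist_pos.mpr hax
    have hxb0 : 0 < dxb := dist_pos.mpr hxb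
    set g : ℝ → X := fun t => if t ≤ dax then g1 t else g2 (t - dax) with hgdef
    have hgax : g dax = x := by simp [hgdef, h1d]
    have hclaim : ∀ s t : ℝ, s ∈ Set.Icc (0:ℝ) (dist a b) →
        t ∈ Set.Icc (0:ℝ) (dist a b) → s ≤ t → dist (g s) (g t) = t - s := by
      intro s t hs ht hst
      by_cases htx : t ≤ dax
      · have hsx : s ≤ dax := le_trans hst htx
        simp only [hgdef, if_pos htx, if_pos hsx]
        rw [h1 s ⟨hs.1, hsx⟩ t ⟨ht.1, htx⟩, abs_of_nonpos (by linarith)]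
        ring
      · push_neg at htx
        have htmem : t - dax ∈ Set.Icc (0:ℝ) dxb := ⟨by linarith, by linarith [ht.2]⟩
        by_cases hsx : s ≤ dax
        · simp only [hgdef, if_pos hsx, if_neg (not_le.mpr htx)]
          have hle : dist (g1 s) (g2 (t - dax)) ≤ t - s := by
            calc dist (g1 s) (g2 (t - dax)) ≤ dist (g1 s) (g1 dax) + dist (g2 0) (g2 (t - dax)) := by
                  rw [h1d, h20]; exact dist_triangle _ _ _
              _ = t - s := by
                  rw [h1 s ⟨hs.1, hsx⟩ dax ⟨le_of_lt hax0, le_refl _⟩,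
                    h2 0 ⟨le_refl _, le_of_lt hxb0⟩ (t - dax) htmem,
                    abs_of_nonpos (by linarith), abs_of_nonpos (by linarith)]
                  ring
          have hge : t - s ≤ dist (g1 s) (g2 (t - dax)) := by
            have htri : dist a b ≤ dist (g1 0) (g1 s) + dist (g1 s) (g2 (t - dax))
                + dist (g2 (t - dax)) (g2 dxb) := by
              rw [h10, h2d]
              calc dist a b ≤ dist a (g2 (t-dax)) + dist (g2 (t-dax)) b := dist_triangle _ _ _
                _ ≤ (dist a (g1 s) + dist (g1 s) (g2 (t-dax))) + dist (g2 (t-dax)) b := by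
                    gcongr; exact dist_triangle _ _ _
                _ = _ := by ring
            rw [h1 0 ⟨le_refl _, le_of_lt hax0⟩ s ⟨hs.1, hsx⟩,
              h2 (t - dax) htmem dxb ⟨le_of_lt hxb0, le_refl _⟩,
              abs_of_nonpos (by linarith [hs.1]), abs_of_nonpos (by linarith [ht.2])] at htri
            linarith
          linarith [le_antisymm hle hge]
        · push_neg at hsx
          have hsmem : s - dax ∈ Set.Icc (0:ℝ) dxb := ⟨by linarith, by linarith [hs.2]⟩
          simp only [hgdef, if_neg (not_le.mpr hsx), if_neg (not_le.mpr htx)]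
          rw [h2 _ hsmem _ htmem, abs_of_nonpos (by linarith)]
          ring
    have hg : IsGeodesic a b g := by
      refine ⟨?_, ?_, ?_⟩
      · simp [hgdef, le_of_lt hax0, h10]
      · have hnb : ¬ dist a b ≤ dax := by linarith
        have he : dist a b - dax = dxb := by linarith
        simp only [hgdef, if_neg hnb, he, h2d]
      · intro s hs t ht
        rcases le_total s t with h | h
        · rw [hclaim s t hs ht h, abs_of_nonpos (by linarith)]; ring
        · rw [dist_comm, hclaim t s ht hs h, abs_of_nonneg (by linarith)]
    have := huniq g hg dax ⟨le_of_lt hax0, by linarith⟩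
    rw [← this, hgax]
  exact ⟨key, fun x y hx hy hd => by rw [key x hx, key y hy, hd]⟩
end

section
/- Let (X, d) be a geodesic space and a, b ∈ X distinct. Define a map Ψ from Geod(a,b) to the vertex set of A(a,b) modulo edge-connectedness by Ψ(f) = [f(t)] for any t ∈ (0, d(a,b)). Then Ψ is well-defined: (1) [f(t)] = [f(t')] for any t, t' ∈ (0, d(a,b)); (2) if f and g intersect at a point other than a or b, then Ψ(f) = Ψ(g). -/
/-- `x` and `y` span a 1-simplex of the simplicial complex `A(a,b)`. -/
def Edge {X : Type*} [MetricSpace X] (a b x y : X) : Prop :=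
  (MBtw a x y ∧ MBtw x y b) ∨ (MBtw a y x ∧ MBtw y x b)

private lemma geo_edge {X : Type*} [MetricSpace X] {a b : X} {f : ℝ → X}
    (hf : IsGeodesic a b f) {t t' : ℝ} (ht : t ∈ Set.Ioo (0 : ℝ) (dist a b))
    (ht' : t' ∈ Set.Ioo (0 : ℝ) (dist a b)) (hlt : t < t') :
    Edge a b (f t) (f t') := by
  obtain ⟨h0, hD, hd⟩ := hf
  have hmt : t ∈ Set.Icc (0 : ℝ) (dist a b) := ⟨le_of_lt ht.1, le_of_lt ht.2⟩
  have hmt' : t' ∈ Set.Icc (0 : ℝ) (dist a b) := ⟨le_of_lt ht'.1, le_of_lt ht'.2⟩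
  have hm0 : (0 : ℝ) ∈ Set.Icc (0 : ℝ) (dist a b) := ⟨le_refl _, dist_nonneg⟩
  have hmD : dist a b ∈ Set.Icc (0 : ℝ) (dist a b) := ⟨dist_nonneg, le_refl _⟩
  have dat : dist a (f t) = t := by
    rw [← h0, hd 0 hm0 t hmt]; rw [abs_of_nonpos (by linarith [ht.1])]; ring
  have datt' : dist (f t) (f t') = t' - t := by
    rw [hd t hmt t' hmt', abs_of_nonpos (by linarith)]; ring
  have dat' : dist a (f t') = t' := by
    rw [← h0, hd 0 hm0 t' hmt', abs_of_nonpos (by linarith [ht'.1])]; ring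
  have dt'b : dist (f t') b = dist a b - t' := by
    have h := hd t' hmt' _ hmD; rw [hD] at h
    rw [h, abs_of_nonpos (by linarith [ht'.2])]; ring
  have dtb : dist (f t) b = dist a b - t := by
    have h := hd t hmt _ hmD; rw [hD] at h
    rw [h, abs_of_nonpos (by linarith [ht.2])]; ring
  left
  refine ⟨⟨?_, ?_, by rw [dat, datt', dat']; ring⟩,
    ⟨?_, ?_, by rw [datt', dt'b, dtb]; ring⟩⟩
  · intro h; rw [← h] at dat; simp at dat; linarith [ht.1]
  · intro h; rw [h] at datt'; simp at datt'; linarith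
  · intro h; rw [h] at datt'; simp at datt'; linarith
  · intro h; rw [h] at dt'b; simp at dt'b; linarith [ht'.2]

private lemma geo_eqv {X : Type*} [MetricSpace X] {a b : X} {f : ℝ → X}
    (hf : IsGeodesic a b f) {t t' : ℝ} (ht : t ∈ Set.Ioo (0 : ℝ) (dist a b))
    (ht' : t' ∈ Set.Ioo (0 : ℝ) (dist a b)) :
    Relation.EqvGen (Edge a b) (f t) (f t') := by
  rcases lt_trichotomy t t' with h | h | h
  · exact Relation.EqvGen.rel _ _ (geo_edge hf ht ht' h)
  · rw [h]; exact Relation.EqvGen.refl _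
  · exact Relation.EqvGen.symm _ _ (Relation.EqvGen.rel _ _ (geo_edge hf ht' ht h))

theorem stmt12 {X : Type*} [MetricSpace X] (hX : GeodesicSpace X)
    (a b : X) (hab : a ≠ b) :
    (∀ f : ℝ → X, IsGeodesic a b f →
      ∀ t ∈ Set.Ioo (0 : ℝ) (dist a b), ∀ t' ∈ Set.Ioo (0 : ℝ) (dist a b),
        Relation.EqvGen (Edge a b) (f t) (f t')) ∧
    (∀ f g : ℝ → X, IsGeodesic a b f → IsGeodesic a b g →
      (∃ s ∈ Set.Ioo (0 : ℝ) (dist a b), ∃ u ∈ Set.Ioo (0 : ℝ) (dist a b), f s = g u) →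
      ∀ t ∈ Set.Ioo (0 : ℝ) (dist a b), ∀ t' ∈ Set.Ioo (0 : ℝ) (dist a b),
        Relation.EqvGen (Edge a b) (f t) (g t')) := by
  constructor
  · intro f hf t ht t' ht'
    exact geo_eqv hf ht ht'
  · rintro f g hf hg ⟨s, hs, u, hu, hsu⟩ t ht t' ht'
    refine Relation.EqvGen.trans _ _ _ (geo_eqv hf ht hs) ?_
    rw [hsu]
    exact geo_eqv hg hu ht'
end

section
/- Let (X, d) be a geodesic space and a, b ∈ X distinct. The map Φ : π₀(A(a,b)) → π₀(Geod(a,b)) sending the class of a vertex x (with a < x < b) to the class of any geodesic joining a to b through x, and the map Ψ : π₀(Geod(a,b)) → π₀(A(a,b)) sending the class of a geodesic f to the class of f(t) for any t ∈ (0, d(a,b)), are mutually inverse bijections. -/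
/-- Two geodesics joining `a` to `b` intersect at a point other than `a` or `b`. -/
def GeodRel {X : Type*} [MetricSpace X] (a b : X) (f g : ℝ → X) : Prop :=
  ∃ s ∈ Set.Ioo (0 : ℝ) (dist a b), ∃ t ∈ Set.Ioo (0 : ℝ) (dist a b), f s = g t

namespace Stmt13Aux

variable {X : Type*} [MetricSpace X]

lemma dist_left {a b : X} {f : ℝ → X} (hf : IsGeodesic a b f)
    {t : ℝ} (ht : t ∈ Set.Icc (0:ℝ) (dist a b)) : dist a (f t) = t := by
  have h := hf.2.2 0 ⟨le_refl 0, dist_nonneg⟩ t ht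
  rw [hf.1, zero_sub, abs_neg, abs_of_nonneg ht.1] at h
  exact h

lemma dist_right {a b : X} {f : ℝ → X} (hf : IsGeodesic a b f)
    {t : ℝ} (ht : t ∈ Set.Icc (0:ℝ) (dist a b)) : dist (f t) b = dist a b - t := by
  have h := hf.2.2 t ht (dist a b) ⟨dist_nonneg, le_refl _⟩
  rw [hf.2.1, abs_of_nonpos (by linarith [ht.2])] at h
  rw [h]; ring

lemma glue {a c b : X} {f g : ℝ → X} (hf : IsGeodesic a c f) (hg : IsGeodesic c b g)
    (hsum : dist a c + dist c b = dist a b) :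
    IsGeodesic a b (fun t => if t ≤ dist a c then f t else g (t - dist a c)) := by
  set p := dist a c with hpdef
  set q := dist c b with hqdef
  have hp : (0:ℝ) ≤ p := dist_nonneg
  have hq : (0:ℝ) ≤ q := dist_nonneg
  have hD : dist a b = p + q := hsum.symm
  have key : ∀ s ∈ Set.Icc (0:ℝ) (dist a b), ∀ t ∈ Set.Icc (0:ℝ) (dist a b), s ≤ t →
      dist ((fun t => if t ≤ p then f t else g (t - p)) s)
           ((fun t => if t ≤ p then f t else g (t - p)) t) = t - s := by
    intro s hs t ht hst
    simp only []
    by_cases htp : t ≤ p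
    · have hsp : s ≤ p := le_trans hst htp
      rw [if_pos hsp, if_pos htp, hf.2.2 s ⟨hs.1, hsp⟩ t ⟨ht.1, htp⟩,
        abs_of_nonpos (by linarith), neg_sub]
    · push_neg at htp
      have hu : t - p ∈ Set.Icc (0:ℝ) q := ⟨by linarith, by linarith [ht.2, hD]⟩
      by_cases hsp : s ≤ p
      · rw [if_pos hsp, if_neg (not_le.mpr htp)]
        have h1 : dist (f s) c = p - s := by
          have := dist_right hf ⟨hs.1, hsp⟩
          simpa using this
        have h2 : dist c (g (t - p)) = t - p := dist_left hg hu
        have h3 : dist (g (t - p)) b = q - (t - p) := by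
          have := dist_right hg hu; linarith [this]
        have h4 : dist a (f s) = s := dist_left hf ⟨hs.1, hsp⟩
        have hub : dist (f s) (g (t - p)) ≤ t - s := by
          calc dist (f s) (g (t - p)) ≤ dist (f s) c + dist c (g (t - p)) := dist_triangle _ _ _
            _ = t - s := by rw [h1, h2]; ring
        have hlb : t - s ≤ dist (f s) (g (t - p)) := by
          have := dist_triangle a (f s) b
          have := dist_triangle (f s) (g (t - p)) b
          have h5 : dist a b ≤ dist a (f s) + (dist (f s) (g (t - p)) + dist (g (t - p)) b) := by
            calc dist a b ≤ dist a (f s) + dist (f s) b := dist_triangle _ _ _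
              _ ≤ _ := add_le_add le_rfl (dist_triangle _ _ _)
          rw [h4, h3, hD] at h5
          linarith
        linarith
      · push_neg at hsp
        rw [if_neg (not_le.mpr hsp), if_neg (not_le.mpr htp)]
        have hsu : s - p ∈ Set.Icc (0:ℝ) q := ⟨by linarith, by linarith [hs.2, hD]⟩
        rw [hg.2.2 _ hsu _ hu, abs_of_nonpos (by linarith), neg_sub]
        ring
  refine ⟨?_, ?_, ?_⟩
  · simp only [if_pos hp]
    exact hf.1
  · by_cases h : dist a b ≤ p
    · have hq0 : q = 0 := by linarith [hD]
      have hcb : c = b := by rw [← dist_eq_zero]; exact hq0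
      simp only [if_pos h]
      have : dist a b = p := by linarith [hD, dist_nonneg (x := c) (y := b)]
      rw [this, hf.2.1, hcb]
    · push_neg at h
      simp only [if_neg (not_le.mpr h)]
      rw [hD]
      have : p + q - p = q := by ring
      rw [this, hg.2.1]
  · intro s hs t ht
    rcases le_total s t with h | h
    · rw [key s hs t ht h, abs_of_nonpos (by linarith), neg_sub]
    · rw [dist_comm, key t ht s hs h, abs_of_nonneg (by linarith)]

lemma mbtw_mem {a b x : X} (h : MBtw a x b) : dist a x ∈ Set.Ioo (0:ℝ) (dist a b) := by
  have h1 : 0 < dist a x := dist_pos.mpr h.1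
  have h2 : 0 < dist x b := dist_pos.mpr h.2.1
  exact ⟨h1, by linarith [h.2.2]⟩

lemma pt_mbtw {a b : X} {f : ℝ → X} (hf : IsGeodesic a b f) {t : ℝ}
    (ht : t ∈ Set.Ioo (0:ℝ) (dist a b)) : MBtw a (f t) b := by
  have ht' : t ∈ Set.Icc (0:ℝ) (dist a b) := ⟨ht.1.le, ht.2.le⟩
  have h1 := dist_left hf ht'
  have h2 := dist_right hf ht'
  refine ⟨?_, ?_, by rw [h1, h2]; ring⟩
  · rw [← dist_pos, h1]; exact ht.1
  · rw [ne_comm, ← dist_pos, dist_comm, h2]; linarith [ht.2]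

lemma exists_geod_through (hX : GeodesicSpace X) {a b x : X} (hx : MBtw a x b) :
    ∃ f, IsGeodesic a b f ∧ f (dist a x) = x := by
  obtain ⟨f1, hf1⟩ := hX a x
  obtain ⟨f2, hf2⟩ := hX x b
  refine ⟨_, glue hf1 hf2 hx.2.2, ?_⟩
  simp only [if_pos (le_refl (dist a x))]
  exact hf1.2.1

lemma exists_geod_through₂ (hX : GeodesicSpace X) {a b x y : X}
    (hxy : MBtw a x y) (hyb : MBtw x y b) (hx : MBtw a x b) :
    ∃ f, IsGeodesic a b f ∧ f (dist a x) = x ∧ f (dist a y) = y := by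
  obtain ⟨f1, hf1⟩ := hX a x
  obtain ⟨f2, hf2⟩ := hX x y
  obtain ⟨f3, hf3⟩ := hX y b
  have hg : IsGeodesic x b (fun t => if t ≤ dist x y then f2 t else f3 (t - dist x y)) :=
    glue hf2 hf3 hyb.2.2
  refine ⟨_, glue hf1 hg hx.2.2, ?_, ?_⟩
  · simp only [if_pos (le_refl (dist a x))]
    exact hf1.2.1
  · have hday : dist a y = dist a x + dist x y := hxy.2.2.symm
    have hxy0 : 0 < dist x y := dist_pos.mpr hxy.2.1
    simp only [if_neg (by linarith : ¬ dist a y ≤ dist a x)]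
    rw [hday]
    have : dist a x + dist x y - dist a x = dist x y := by ring
    rw [this]
    simp only [if_pos (le_refl (dist x y))]
    exact hf2.2.1

lemma edge_of_lt {a b : X} {f : ℝ → X} (hf : IsGeodesic a b f) {s t : ℝ}
    (hs : s ∈ Set.Ioo (0:ℝ) (dist a b)) (ht : t ∈ Set.Ioo (0:ℝ) (dist a b))
    (hst : s < t) : Edge a b (f s) (f t) := by
  have hs' : s ∈ Set.Icc (0:ℝ) (dist a b) := ⟨hs.1.le, hs.2.le⟩
  have ht' : t ∈ Set.Icc (0:ℝ) (dist a b) := ⟨ht.1.le, ht.2.le⟩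
  have hdst : dist (f s) (f t) = t - s := by
    rw [hf.2.2 s hs' t ht', abs_of_nonpos (by linarith), neg_sub]
  have has := dist_left hf hs'
  have hat := dist_left hf ht'
  have hsb := dist_right hf hs'
  have htb := dist_right hf ht'
  have hfst : f s ≠ f t := by rw [← dist_pos, hdst]; linarith
  left
  constructor
  · exact ⟨(pt_mbtw hf hs).1, hfst, by rw [has, hdst, hat]; ring⟩
  · exact ⟨hfst, (pt_mbtw hf ht).2.1, by rw [hdst, htb, hsb]; ring⟩

lemma quot_pt_eq {a b : X} {f : ℝ → X} (hf : IsGeodesic a b f) {s t : ℝ}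
    (hs : s ∈ Set.Ioo (0:ℝ) (dist a b)) (ht : t ∈ Set.Ioo (0:ℝ) (dist a b))
    (x y : {x : X // MBtw a x b}) (hx : x.1 = f s) (hy : y.1 = f t) :
    Quot.mk (fun x y : {x : X // MBtw a x b} => Edge a b x.1 y.1) x = Quot.mk _ y := by
  rcases lt_trichotomy s t with h | h | h
  · exact Quot.sound (by rw [hx, hy]; exact edge_of_lt hf hs ht h)
  · subst h
    have : x = y := Subtype.ext (hx.trans hy.symm)
    rw [this]
  · exact (Quot.sound (by rw [hx, hy]; exact edge_of_lt hf ht hs h)).symm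

end Stmt13Aux

open Stmt13Aux in
theorem stmt13 {X : Type*} [MetricSpace X] (hX : GeodesicSpace X)
    (a b : X) (hab : a ≠ b) :
    ∃ (Φ : Quot (fun x y : {x : X // MBtw a x b} => Edge a b x.1 y.1) →
           Quot (fun f g : {f : ℝ → X // IsGeodesic a b f} => GeodRel a b f.1 g.1))
      (Ψ : Quot (fun f g : {f : ℝ → X // IsGeodesic a b f} => GeodRel a b f.1 g.1) →
           Quot (fun x y : {x : X // MBtw a x b} => Edge a b x.1 y.1)),
      (∀ (x : {x : X // MBtw a x b}) (f : {f : ℝ → X // IsGeodesic a b f}),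
          (∃ t ∈ Set.Ioo (0 : ℝ) (dist a b), f.1 t = x.1) →
          Φ (Quot.mk _ x) = Quot.mk _ f) ∧
      (∀ (f : {f : ℝ → X // IsGeodesic a b f}) (t : ℝ),
          t ∈ Set.Ioo (0 : ℝ) (dist a b) →
          ∀ (x : {x : X // MBtw a x b}), x.1 = f.1 t →
          Ψ (Quot.mk _ f) = Quot.mk _ x) ∧
      Function.LeftInverse Ψ Φ ∧ Function.RightInverse Ψ Φ := by
  classical
  have hD : (0:ℝ) < dist a b := dist_pos.mpr hab
  have hmid : dist a b / 2 ∈ Set.Ioo (0:ℝ) (dist a b) := ⟨by linarith, by linarith⟩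
  choose g hg hgx using fun x : {x : X // MBtw a x b} => exists_geod_through hX x.2
  have wdΦ : ∀ x y : {x : X // MBtw a x b}, Edge a b x.1 y.1 →
      Quot.mk (fun f g : {f : ℝ → X // IsGeodesic a b f} => GeodRel a b f.1 g.1)
        ⟨g x, hg x⟩ = Quot.mk _ ⟨g y, hg y⟩ := by
    have main : ∀ x y : {x : X // MBtw a x b}, MBtw a x.1 y.1 → MBtw x.1 y.1 b →
        Quot.mk (fun f g : {f : ℝ → X // IsGeodesic a b f} => GeodRel a b f.1 g.1)
          ⟨g x, hg x⟩ = Quot.mk _ ⟨g y, hg y⟩ := by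
      intro x y hxy hyb
      obtain ⟨h, hh, hhx, hhy⟩ := exists_geod_through₂ hX hxy hyb x.2
      have e1 : Quot.mk (fun f g : {f : ℝ → X // IsGeodesic a b f} => GeodRel a b f.1 g.1)
          ⟨g x, hg x⟩ = Quot.mk _ ⟨h, hh⟩ :=
        Quot.sound ⟨dist a x.1, mbtw_mem x.2, dist a x.1, mbtw_mem x.2,
          (hgx x).trans hhx.symm⟩
      have e2 : Quot.mk (fun f g : {f : ℝ → X // IsGeodesic a b f} => GeodRel a b f.1 g.1)
          ⟨h, hh⟩ = Quot.mk _ ⟨g y, hg y⟩ :=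
        Quot.sound ⟨dist a y.1, mbtw_mem y.2, dist a y.1, mbtw_mem y.2,
          hhy.trans (hgx y).symm⟩
      exact e1.trans e2
    intro x y hedge
    rcases hedge with ⟨h1, h2⟩ | ⟨h1, h2⟩
    · exact main x y h1 h2
    · exact (main y x h1 h2).symm
  have wdΨ : ∀ f f' : {f : ℝ → X // IsGeodesic a b f}, GeodRel a b f.1 f'.1 →
      Quot.mk (fun x y : {x : X // MBtw a x b} => Edge a b x.1 y.1)
        ⟨f.1 (dist a b / 2), pt_mbtw f.2 hmid⟩ =
      Quot.mk _ ⟨f'.1 (dist a b / 2), pt_mbtw f'.2 hmid⟩ := by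
    rintro f f' ⟨s, hs, t, ht, hst⟩
    have e1 := quot_pt_eq f.2 hmid hs ⟨f.1 (dist a b / 2), pt_mbtw f.2 hmid⟩
      ⟨f.1 s, pt_mbtw f.2 hs⟩ rfl rfl
    have e2 : (⟨f.1 s, pt_mbtw f.2 hs⟩ : {x : X // MBtw a x b}) =
        ⟨f'.1 t, pt_mbtw f'.2 ht⟩ := Subtype.ext hst
    have e3 := quot_pt_eq f'.2 ht hmid ⟨f'.1 t, pt_mbtw f'.2 ht⟩
      ⟨f'.1 (dist a b / 2), pt_mbtw f'.2 hmid⟩ rfl rfl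
    rw [e1, e2, e3]
  refine ⟨Quot.lift (fun x => Quot.mk _ ⟨g x, hg x⟩) wdΦ,
    Quot.lift (fun f => Quot.mk _ ⟨f.1 (dist a b / 2), pt_mbtw f.2 hmid⟩) wdΨ,
    ?_, ?_, ?_, ?_⟩
  · rintro x f ⟨t, ht, hft⟩
    exact Quot.sound ⟨dist a x.1, mbtw_mem x.2, t, ht, (hgx x).trans hft.symm⟩
  · intro f t ht x hx
    exact quot_pt_eq f.2 hmid ht ⟨f.1 (dist a b / 2), pt_mbtw f.2 hmid⟩ x rfl hx
  · apply Quot.ind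
    intro x
    exact quot_pt_eq (hg x) hmid (mbtw_mem x.2)
      ⟨g x (dist a b / 2), pt_mbtw (hg x) hmid⟩ x rfl (hgx x).symm
  · apply Quot.ind
    intro f
    exact Quot.sound ⟨dist a (f.1 (dist a b / 2)), mbtw_mem (pt_mbtw f.2 hmid),
      dist a b / 2, hmid, hgx ⟨f.1 (dist a b / 2), pt_mbtw f.2 hmid⟩⟩
end

section
/- Let (X, d) be a geodesic space satisfying the non-branching condition: any two geodesics joining the same endpoints that share a point other than the endpoints coincide. Let q ≥ 2 and let φ₀, …, φ_q ∈ X with consecutive points distinct, and suppose for each i = 1, …, q there exist two distinct geodesics f_i ≠ f_i' joining φ_{i−1} to φ_i. Then there exist points x_i on f_i((0, ℓ_i)) and x_i' on f_i'((0, ℓ_i)) (where ℓ_i = d(φ_{i−1}, φ_i)) such that for each i = 1, …, q−1 and each choice of y ∈ {x_i, x_i'} and z ∈ {x_{i+1}, x_{i+1}'}, one has d(y, φ_i) + d(φ_i, z) > d(y, z). -/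
/-- Non-branching: two geodesics with the same endpoints sharing an interior point agree
on the whole parameter interval. -/
def NonBranching (X : Type*) [MetricSpace X] : Prop :=
  ∀ p q : X, ∀ f g : ℝ → X, IsGeodesic p q f → IsGeodesic p q g →
    (∃ t ∈ Set.Ioo (0 : ℝ) (dist p q), f t = g t) →
    ∀ t ∈ Set.Icc (0 : ℝ) (dist p q), f t = g t

open Set

lemma dist_right {X : Type*} [MetricSpace X] {p m : X} {g : ℝ → X}
    (hg : IsGeodesic p m g) {s : ℝ} (hs : s ∈ Icc 0 (dist p m)) :
    dist (g s) m = dist p m - s := by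
  have h := hg.2.2 s hs (dist p m) ⟨dist_nonneg, le_refl _⟩
  rw [hg.2.1] at h
  rw [h, abs_of_nonpos (by linarith [hs.2])]
  ring

lemma dist_left {X : Type*} [MetricSpace X] {p m : X} {g : ℝ → X}
    (hg : IsGeodesic p m g) {s : ℝ} (hs : s ∈ Icc 0 (dist p m)) :
    dist p (g s) = s := by
  have h := hg.2.2 0 ⟨le_refl _, dist_nonneg⟩ s hs
  rw [hg.1] at h
  rw [h, abs_of_nonpos (by linarith [hs.1])]
  ring

lemma lemA {X : Type*} [MetricSpace X] (hnb : NonBranching X)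
    {p m w : X} {f f' F : ℝ → X}
    (hf : IsGeodesic p m f) (hf' : IsGeodesic p m f') (hF : IsGeodesic m w F)
    (hne : ∃ t₀ ∈ Set.Icc (0:ℝ) (dist p m), f t₀ ≠ f' t₀)
    (hpm : p ≠ m)
    {t : ℝ} (ht : t ∈ Set.Ioo (0:ℝ) (dist m w)) :
    ∃ σ, σ ∈ Set.Ioo (0:ℝ) (dist p m) ∧
      ∀ s ∈ Set.Ioc (0:ℝ) σ, dist (f s) m + dist m (F t) > dist (f s) (F t) := by
  have hℓ : 0 < dist p m := dist_pos.2 hpm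
  have htIcc : t ∈ Icc (0:ℝ) (dist m w) := ⟨le_of_lt ht.1, le_of_lt ht.2⟩
  have hFb : ∀ b ∈ Icc (0:ℝ) (dist m w), dist m (F b) = b := by
    intro b hb; exact dist_left hF hb
  suffices core : ∃ σ ∈ Ioo (0:ℝ) (dist p m),
      dist (f σ) (F t) < dist (f σ) m + dist m (F t) by
    obtain ⟨σ, hσ, hcore⟩ := core
    refine ⟨σ, hσ, ?_⟩
    intro s hs
    have hsIcc : s ∈ Icc (0:ℝ) (dist p m) := ⟨le_of_lt hs.1, hs.2.trans (le_of_lt hσ.2)⟩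
    have hσIcc : σ ∈ Icc (0:ℝ) (dist p m) := ⟨le_of_lt hσ.1, le_of_lt hσ.2⟩
    have h1 : dist (f s) (F t) ≤ dist (f s) (f σ) + dist (f σ) (F t) := dist_triangle _ _ _
    have h2 : dist (f s) (f σ) = σ - s := by
      rw [hf.2.2 s hsIcc σ hσIcc, abs_of_nonpos (by linarith [hs.2])]; ring
    have h3 := dist_right hf hsIcc
    have h4 := dist_right hf hσIcc
    rw [h3]; rw [h4] at hcore; linarith
  by_contra hc
  push_neg at hc
  have heq : ∀ σ ∈ Ioo (0:ℝ) (dist p m), dist (f σ) (F t) = (dist p m - σ) + t := by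
    intro σ hσ
    have hσIcc : σ ∈ Icc (0:ℝ) (dist p m) := ⟨le_of_lt hσ.1, le_of_lt hσ.2⟩
    have h1 := hc σ hσ
    have h2 : dist (f σ) (F t) ≤ dist (f σ) m + dist m (F t) := dist_triangle _ _ _
    rw [le_antisymm h2 h1, dist_right hf hσIcc, hFb t htIcc]
  have hdt : dist p (F t) = dist p m + t := by
    apply le_antisymm
    · calc dist p (F t) ≤ dist p m + dist m (F t) := dist_triangle _ _ _
        _ = dist p m + t := by rw [hFb t htIcc]
    · apply le_of_forall_pos_le_add
      intro ε hε
      set σ := min (dist p m / 2) (ε / 2) with hσdef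
      have hσ : σ ∈ Ioo (0:ℝ) (dist p m) := by
        constructor
        · exact lt_min (by linarith) (by linarith)
        · exact (min_le_left _ _).trans_lt (by linarith)
      have h1 := heq σ hσ
      have h2 : dist (f σ) (F t) ≤ dist (f σ) p + dist p (F t) := dist_triangle _ _ _
      have h3 : dist (f σ) p = σ := by rw [dist_comm]; exact dist_left hf ⟨le_of_lt hσ.1, le_of_lt hσ.2⟩
      have h4 : σ ≤ ε / 2 := min_le_right _ _
      linarith
  have hdb : ∀ b ∈ Icc (0:ℝ) t, dist p (F b) = dist p m + b := by
    intro b hb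
    have hbIcc : b ∈ Icc (0:ℝ) (dist m w) := ⟨hb.1, hb.2.trans (le_of_lt ht.2)⟩
    apply le_antisymm
    · calc dist p (F b) ≤ dist p m + dist m (F b) := dist_triangle _ _ _
        _ = dist p m + b := by rw [hFb b hbIcc]
    · have h1 : dist p (F t) ≤ dist p (F b) + dist (F b) (F t) := dist_triangle _ _ _
      have h2 : dist (F b) (F t) = t - b := by
        rw [hF.2.2 b hbIcc t htIcc, abs_of_nonpos (by linarith [hb.2])]; ring
      rw [hdt] at h1; linarith
  have cross : ∀ (g : ℝ → X), IsGeodesic p m g → ∀ a ∈ Icc (0:ℝ) (dist p m),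
      ∀ b ∈ Icc (0:ℝ) t, dist (g a) (F b) = (dist p m - a) + b := by
    intro g hg a ha b hb
    have hbIcc : b ∈ Icc (0:ℝ) (dist m w) := ⟨hb.1, hb.2.trans (le_of_lt ht.2)⟩
    apply le_antisymm
    · calc dist (g a) (F b) ≤ dist (g a) m + dist m (F b) := dist_triangle _ _ _
        _ = (dist p m - a) + b := by rw [dist_right hg ha, hFb b hbIcc]
    · have h1 : dist p (F b) ≤ dist p (g a) + dist (g a) (F b) := dist_triangle _ _ _
      rw [hdb b hb, dist_left hg ha] at h1; linarith
  set L := dist p m with hLdef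
  have hΓ : ∀ (g : ℝ → X), IsGeodesic p m g →
      IsGeodesic p (F t) (fun a => if a ≤ L then g a else F (a - L)) := by
    intro g hg
    refine ⟨?_, ?_, ?_⟩
    · simp only [if_pos (le_of_lt hℓ : (0:ℝ) ≤ L)]; exact hg.1
    · rw [hdt]
      simp only [if_neg (by push_neg; linarith [ht.1] : ¬ (L + t ≤ L))]
      rw [show L + t - L = t by ring]
    · intro a ha b hb
      rw [hdt] at ha hb
      by_cases hal : a ≤ L <;> by_cases hbl : b ≤ L <;>
        simp only [hal, hbl, if_true, if_false, if_pos, if_neg, not_le]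
      · exact hg.2.2 a ⟨ha.1, hal⟩ b ⟨hb.1, hbl⟩
      · push_neg at hbl
        have := cross g hg a ⟨ha.1, hal⟩ (b - L) ⟨by linarith, by linarith [hb.2]⟩
        rw [this, abs_of_nonpos (by linarith)]; ring
      · push_neg at hal
        rw [dist_comm]
        have := cross g hg b ⟨hb.1, hbl⟩ (a - L) ⟨by linarith, by linarith [ha.2]⟩
        rw [this, abs_of_nonneg (by linarith)]; ring
      · push_neg at hal hbl
        have := hF.2.2 (a - L) ⟨by linarith, by linarith [ha.2, ht.2]⟩
          (b - L) ⟨by linarith, by linarith [hb.2, ht.2]⟩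
        rw [this, show a - L - (b - L) = a - b by ring]
  have hsh : ∃ u ∈ Ioo (0:ℝ) (dist p (F t)),
      (fun a => if a ≤ L then f a else F (a - L)) u = (fun a => if a ≤ L then f' a else F (a - L)) u := by
    refine ⟨L, by rw [hdt]; exact ⟨hℓ, by linarith [ht.1]⟩, ?_⟩
    simp only [if_pos (le_refl L)]
    rw [hf.2.1, hf'.2.1]
  have nb := hnb p (F t) _ _ (hΓ f hf) (hΓ f' hf') hsh
  obtain ⟨t₀, ht₀, hne'⟩ := hne
  have h := nb t₀ ⟨ht₀.1, by rw [hdt]; linarith [ht₀.2, ht.1]⟩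
  simp only [if_pos ht₀.2] at h
  exact hne' h

lemma gapStep {X : Type*} [MetricSpace X] (hnb : NonBranching X)
    {p m w : X} {f f' F F' : ℝ → X}
    (hf : IsGeodesic p m f) (hf' : IsGeodesic p m f')
    (hF : IsGeodesic m w F) (hF' : IsGeodesic m w F')
    (hne : ∃ t₀ ∈ Set.Icc (0:ℝ) (dist p m), f t₀ ≠ f' t₀)
    (hpm : p ≠ m)
    {t t' : ℝ} (ht : t ∈ Set.Ioo (0:ℝ) (dist m w)) (ht' : t' ∈ Set.Ioo (0:ℝ) (dist m w)) :
    ∃ s s' : ℝ, s ∈ Set.Ioo (0:ℝ) (dist p m) ∧ s' ∈ Set.Ioo (0:ℝ) (dist p m) ∧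
      dist (f s) m + dist m (F t) > dist (f s) (F t) ∧
      dist (f s) m + dist m (F' t') > dist (f s) (F' t') ∧
      dist (f' s') m + dist m (F t) > dist (f' s') (F t) ∧
      dist (f' s') m + dist m (F' t') > dist (f' s') (F' t') := by
  have hne' : ∃ t₀ ∈ Set.Icc (0:ℝ) (dist p m), f' t₀ ≠ f t₀ := by
    obtain ⟨t₀, h1, h2⟩ := hne; exact ⟨t₀, h1, h2.symm⟩
  obtain ⟨σ₁, hσ₁, H₁⟩ := lemA hnb hf hf' hF hne hpm ht
  obtain ⟨σ₂, hσ₂, H₂⟩ := lemA hnb hf hf' hF' hne hpm ht'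
  obtain ⟨σ₃, hσ₃, H₃⟩ := lemA hnb hf' hf hF hne' hpm ht
  obtain ⟨σ₄, hσ₄, H₄⟩ := lemA hnb hf' hf hF' hne' hpm ht'
  refine ⟨min σ₁ σ₂, min σ₃ σ₄,
    ⟨lt_min hσ₁.1 hσ₂.1, (min_le_left _ _).trans_lt hσ₁.2⟩,
    ⟨lt_min hσ₃.1 hσ₄.1, (min_le_left _ _).trans_lt hσ₃.2⟩,
    H₁ _ ⟨lt_min hσ₁.1 hσ₂.1, min_le_left _ _⟩,
    H₂ _ ⟨lt_min hσ₁.1 hσ₂.1, min_le_right _ _⟩,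
    H₃ _ ⟨lt_min hσ₃.1 hσ₄.1, min_le_left _ _⟩,
    H₄ _ ⟨lt_min hσ₃.1 hσ₄.1, min_le_right _ _⟩⟩


theorem stmt14 {X : Type*} [MetricSpace X] (hX : GeodesicSpace X) (hnb : NonBranching X)
    (q : ℕ) (hq : 2 ≤ q) (φ : Fin (q + 1) → X)
    (hφ : ∀ i : Fin q, φ i.castSucc ≠ φ i.succ)
    (f f' : Fin q → ℝ → X)
    (hf : ∀ i, IsGeodesic (φ i.castSucc) (φ i.succ) (f i))
    (hf' : ∀ i, IsGeodesic (φ i.castSucc) (φ i.succ) (f' i))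
    (hne : ∀ i, ∃ t ∈ Set.Icc (0 : ℝ) (dist (φ i.castSucc) (φ i.succ)), f i t ≠ f' i t) :
    ∃ x x' : Fin q → X,
      (∀ i, ∃ t ∈ Set.Ioo (0 : ℝ) (dist (φ i.castSucc) (φ i.succ)), f i t = x i) ∧
      (∀ i, ∃ t ∈ Set.Ioo (0 : ℝ) (dist (φ i.castSucc) (φ i.succ)), f' i t = x' i) ∧
      (∀ i j : Fin q, (i : ℕ) + 1 = (j : ℕ) →
        ∀ y ∈ ({x i, x' i} : Set X), ∀ z ∈ ({x j, x' j} : Set X),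
          dist y (φ i.succ) + dist (φ i.succ) z > dist y z) := by

  obtain ⟨n, rfl⟩ : ∃ n, q = n + 1 := ⟨q - 1, by omega⟩
  clear hq hX
  have hd : ∀ k : Fin (n+1), 0 < dist (φ k.castSucc) (φ k.succ) := fun k => dist_pos.2 (hφ k)
  have key : ∀ (i : Fin n)
      (prev : {pr : ℝ × ℝ //
        pr.1 ∈ Set.Ioo (0:ℝ) (dist (φ (i.succ).castSucc) (φ (i.succ).succ)) ∧
        pr.2 ∈ Set.Ioo (0:ℝ) (dist (φ (i.succ).castSucc) (φ (i.succ).succ))}),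
      ∃ cur : {pr : ℝ × ℝ //
        pr.1 ∈ Set.Ioo (0:ℝ) (dist (φ (i.castSucc).castSucc) (φ (i.castSucc).succ)) ∧
        pr.2 ∈ Set.Ioo (0:ℝ) (dist (φ (i.castSucc).castSucc) (φ (i.castSucc).succ))},
      (dist (f i.castSucc cur.1.1) (φ (i.castSucc).succ)
          + dist (φ (i.castSucc).succ) (f i.succ prev.1.1)
        > dist (f i.castSucc cur.1.1) (f i.succ prev.1.1)) ∧
      (dist (f i.castSucc cur.1.1) (φ (i.castSucc).succ)
          + dist (φ (i.castSucc).succ) (f' i.succ prev.1.2)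
        > dist (f i.castSucc cur.1.1) (f' i.succ prev.1.2)) ∧
      (dist (f' i.castSucc cur.1.2) (φ (i.castSucc).succ)
          + dist (φ (i.castSucc).succ) (f i.succ prev.1.1)
        > dist (f' i.castSucc cur.1.2) (f i.succ prev.1.1)) ∧
      (dist (f' i.castSucc cur.1.2) (φ (i.castSucc).succ)
          + dist (φ (i.castSucc).succ) (f' i.succ prev.1.2)
        > dist (f' i.castSucc cur.1.2) (f' i.succ prev.1.2)) := by
    intro i prev
    have hcs : (i.castSucc).succ = (i.succ).castSucc := Fin.succ_castSucc i
    have hFg : IsGeodesic (φ (i.castSucc).succ) (φ (i.succ).succ) (f i.succ) := by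
      rw [hcs]; exact hf i.succ
    have hFg' : IsGeodesic (φ (i.castSucc).succ) (φ (i.succ).succ) (f' i.succ) := by
      rw [hcs]; exact hf' i.succ
    have ht : prev.1.1 ∈ Set.Ioo (0:ℝ) (dist (φ (i.castSucc).succ) (φ (i.succ).succ)) := by
      rw [hcs]; exact prev.2.1
    have ht' : prev.1.2 ∈ Set.Ioo (0:ℝ) (dist (φ (i.castSucc).succ) (φ (i.succ).succ)) := by
      rw [hcs]; exact prev.2.2
    obtain ⟨s, s', hs, hs', H1, H2, H3, H4⟩ :=
      gapStep hnb (hf i.castSucc) (hf' i.castSucc) hFg hFg' (hne i.castSucc)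
        (hφ i.castSucc) ht ht'
    exact ⟨⟨(s, s'), hs, hs'⟩, H1, H2, H3, H4⟩
  choose step hstep using key
  have lastV : {pr : ℝ × ℝ //
      pr.1 ∈ Set.Ioo (0:ℝ) (dist (φ (Fin.last n).castSucc) (φ (Fin.last n).succ)) ∧
      pr.2 ∈ Set.Ioo (0:ℝ) (dist (φ (Fin.last n).castSucc) (φ (Fin.last n).succ))} :=
    ⟨(dist (φ (Fin.last n).castSucc) (φ (Fin.last n).succ) / 2,
      dist (φ (Fin.last n).castSucc) (φ (Fin.last n).succ) / 2),
      ⟨half_pos (hd _), half_lt_self (hd _)⟩, ⟨half_pos (hd _), half_lt_self (hd _)⟩⟩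
  set S := Fin.reverseInduction
      (motive := fun k : Fin (n+1) => {pr : ℝ × ℝ //
        pr.1 ∈ Set.Ioo (0:ℝ) (dist (φ k.castSucc) (φ k.succ)) ∧
        pr.2 ∈ Set.Ioo (0:ℝ) (dist (φ k.castSucc) (φ k.succ))})
      lastV step with hSdef
  refine ⟨fun i => f i (S i).1.1, fun i => f' i (S i).1.2, ?_, ?_, ?_⟩
  · intro i; exact ⟨(S i).1.1, (S i).2.1, rfl⟩
  · intro i; exact ⟨(S i).1.2, (S i).2.2, rfl⟩
  · intro i j hij y hy z hz
    have hjn := j.isLt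
    obtain ⟨i₀, hi, hj⟩ : ∃ i₀ : Fin n, i = i₀.castSucc ∧ j = i₀.succ :=
      ⟨⟨i.1, by omega⟩, Fin.ext rfl, Fin.ext (by simp [← hij])⟩
    subst hi; subst hj
    have hSeq : S i₀.castSucc = step i₀ (S i₀.succ) := by
      rw [hSdef]; exact Fin.reverseInduction_castSucc i₀
    have H := hstep i₀ (S i₀.succ)
    rw [← hSeq] at H
    obtain ⟨H1, H2, H3, H4⟩ := H
    simp only [Set.mem_insert_iff, Set.mem_singleton_iff] at hy hz
    rcases hy with rfl | rfl <;> rcases hz with rfl | rfl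
    exacts [H1, H2, H3, H4]
end

section
/- Let (X, d) be a geodesic space satisfying the non-branching condition (two geodesics with the same endpoints sharing an interior point are equal). Let φ₀, φ₁, φ₂ ∈ X with φ₀ ≠ φ₁ ≠ φ₂, suppose x lies on some geodesic from φ₀ to φ₁ with φ₀ < x < φ₁, and suppose there exist two distinct geodesics joining φ₁ to φ₂. Then d(x, φ₁) + d(φ₁, φ₂) > d(x, φ₂). -/
lemma concat_geo {X : Type*} [MetricSpace X] {φ₀ φ₁ φ₂ x : X}
    {g gi : ℝ → X} {t₀ : ℝ}
    (hg : IsGeodesic φ₀ φ₁ g) (hgi : IsGeodesic φ₁ φ₂ gi)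
    (ht₀ : t₀ ∈ Set.Ioo 0 (dist φ₀ φ₁)) (hgt : g t₀ = x)
    (hb0 : 0 < dist φ₁ φ₂)
    (heq : dist x φ₂ = dist x φ₁ + dist φ₁ φ₂) :
    IsGeodesic x φ₂ (fun t => if t ≤ dist x φ₁ then g (t₀ + t) else gi (t - dist x φ₁)) := by
  obtain ⟨hg0, hgD, hgiso⟩ := hg
  obtain ⟨hi0, hib, hiiso⟩ := hgi
  set D := dist φ₀ φ₁ with hD
  set a := dist x φ₁ with ha
  set b := dist φ₁ φ₂ with hb
  have hbnn : (0:ℝ) ≤ b := le_of_lt hb0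
  have ht₀0 : 0 < t₀ := ht₀.1
  have ht₀D : t₀ < D := ht₀.2
  have haD : a = D - t₀ := by
    have h := hgiso t₀ ⟨le_of_lt ht₀0, le_of_lt ht₀D⟩ D ⟨dist_nonneg, le_refl D⟩
    rw [hgt, hgD] at h
    rw [ha, h, abs_of_nonpos (by linarith)]; ring
  have hann : (0:ℝ) ≤ a := dist_nonneg
  have hGx : ∀ u, 0 ≤ u → u ≤ a → dist (g (t₀ + u)) x = u := by
    intro u h0 h1
    have h := hgiso (t₀ + u) ⟨by linarith, by linarith⟩ t₀ ⟨by linarith, by linarith⟩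
    rw [hgt] at h
    rw [h, abs_of_nonneg (by linarith)]; ring
  have hG1 : ∀ u, 0 ≤ u → u ≤ a → dist (g (t₀ + u)) φ₁ = a - u := by
    intro u h0 h1
    have h := hgiso (t₀ + u) ⟨by linarith, by linarith⟩ D ⟨dist_nonneg, le_refl D⟩
    rw [hgD] at h
    rw [h, abs_of_nonpos (by linarith)]; linarith
  have hI1 : ∀ u, 0 ≤ u → u ≤ b → dist (gi u) φ₁ = u := by
    intro u h0 h1
    have h := hiiso u ⟨h0, h1⟩ 0 ⟨le_refl 0, hbnn⟩
    rw [hi0] at h; rw [h, abs_of_nonneg (by linarith)]; ring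
  have hI2 : ∀ u, 0 ≤ u → u ≤ b → dist (gi u) φ₂ = b - u := by
    intro u h0 h1
    have h := hiiso u ⟨h0, h1⟩ b ⟨hbnn, le_refl b⟩
    rw [hib] at h; rw [h, abs_of_nonpos (by linarith)]; ring
  have mixed : ∀ s t, 0 ≤ s → s ≤ a → a < t → t ≤ a + b →
      dist (g (t₀ + s)) (gi (t - a)) = t - s := by
    intro s t hs0 hsa hat htab
    have h1 := hGx s hs0 hsa
    have h2 := hG1 s hs0 hsa
    have h3 := hI1 (t - a) (by linarith) (by linarith)
    have h4 := hI2 (t - a) (by linarith) (by linarith)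
    have hub : dist (g (t₀ + s)) (gi (t - a)) ≤ t - s := by
      calc dist (g (t₀ + s)) (gi (t - a))
          ≤ dist (g (t₀ + s)) φ₁ + dist φ₁ (gi (t - a)) := dist_triangle _ _ _
        _ = (a - s) + (t - a) := by rw [h2, dist_comm φ₁, h3]
        _ = t - s := by ring
    have hlb := dist_triangle4 x (g (t₀ + s)) (gi (t - a)) φ₂
    rw [dist_comm x (g (t₀ + s)), h1, h4, heq] at hlb
    linarith
  refine ⟨?_, ?_, ?_⟩
  · simp only [if_pos hann, add_zero, hgt]
  · rw [heq]
    have : ¬ (a + b ≤ a) := by linarith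
    simp only [this, if_neg, ite_false]
    rw [show a + b - a = b by ring, hib]
  · rw [heq]
    intro s hs t ht
    simp only
    by_cases hsA : s ≤ a <;> by_cases htA : t ≤ a
    · rw [if_pos hsA, if_pos htA]
      have h := hgiso (t₀ + s) ⟨by linarith [hs.1], by linarith [hs.1]⟩
        (t₀ + t) ⟨by linarith [ht.1], by linarith [ht.1]⟩
      rw [h]; congr 1; ring
    · rw [if_pos hsA, if_neg htA]
      push_neg at htA
      rw [mixed s t hs.1 hsA htA ht.2, abs_of_nonpos (by linarith)]; ring
    · rw [if_neg hsA, if_pos htA]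
      push_neg at hsA
      rw [dist_comm, mixed t s ht.1 htA hsA hs.2, abs_of_nonneg (by linarith)]
    · rw [if_neg hsA, if_neg htA]
      push_neg at hsA htA
      have h := hiiso (s - a) ⟨by linarith, by linarith [hs.2]⟩
        (t - a) ⟨by linarith, by linarith [ht.2]⟩
      rw [h]; congr 1; ring

theorem stmt15 {X : Type*} [MetricSpace X] (hX : GeodesicSpace X) (hnb : NonBranching X)
    (φ₀ φ₁ φ₂ x : X) (h12 : φ₁ ≠ φ₂) (hx : MBtw φ₀ x φ₁)
    (hgx : ∃ g : ℝ → X, IsGeodesic φ₀ φ₁ g ∧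
      ∃ t ∈ Set.Ioo (0 : ℝ) (dist φ₀ φ₁), g t = x)
    (g₁ g₂ : ℝ → X) (hg₁ : IsGeodesic φ₁ φ₂ g₁) (hg₂ : IsGeodesic φ₁ φ₂ g₂)
    (hne : ∃ t ∈ Set.Icc (0 : ℝ) (dist φ₁ φ₂), g₁ t ≠ g₂ t) :
    dist x φ₁ + dist φ₁ φ₂ > dist x φ₂ := by
  by_contra hcon
  push_neg at hcon
  have heq : dist x φ₂ = dist x φ₁ + dist φ₁ φ₂ :=
    le_antisymm (dist_triangle x φ₁ φ₂) hcon
  obtain ⟨g, hg, t₀, ht₀, hgt⟩ := hgx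
  set a := dist x φ₁ with ha
  set b := dist φ₁ φ₂ with hb
  have hb0 : 0 < b := dist_pos.mpr h12
  have ha0 : 0 < a := dist_pos.mpr hx.2.1
  have hF₁ := concat_geo hg hg₁ ht₀ hgt hb0 heq
  have hF₂ := concat_geo hg hg₂ ht₀ hgt hb0 heq
  have hall := hnb x φ₂ _ _ hF₁ hF₂
    ⟨a / 2, by rw [heq]; constructor <;> [linarith; linarith], by
      beta_reduce
      split_ifs with hc
      · rfl
      · exfalso; apply hc; rw [← ha]; linarith⟩
  obtain ⟨t, ht, htne⟩ := hne
  have ht0 : 0 < t := by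
    rcases lt_or_eq_of_le ht.1 with h | h
    · exact h
    · exfalso; apply htne; rw [← h, hg₁.1, hg₂.1]
  have := hall (a + t) (by rw [heq]; constructor <;> linarith [ht.1, ht.2])
  beta_reduce at this
  split_ifs at this with hc
  · exfalso; rw [← ha] at hc; linarith
  rw [← ha, add_sub_cancel_left] at this
  exact htne this
end
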